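/- Let k be a field complete with respect to a non-trivial non-archimedean norm with valuation ring 𝒪_k, and fix ϖ ∈ k with 0 < |ϖ| < 1. Let R = k[T,T⁻¹,Z]/(Z²) and let R₀ be the 𝒪_k-submodule of R with basis {ϖ^{|n|}Tⁿ : n ∈ ℤ} ∪ {ϖ^{-|n|}TⁿZ : n ∈ ℤ}. Then R₀ is an 𝒪_k-subalgebra of R with k·R₀ = R. -/

import Mathlib

/-- The valuation ring `𝒪_k = {c : k | ‖c‖ ≤ 1}` of a non-archimedean normed field. -/
def valuationSubring (k : Type*) [NormedField k] [IsUltrametricDist k] : Subring k where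
  carrier := {c | ‖c‖ ≤ 1}
  one_mem' := by simp
  zero_mem' := by simp
  neg_mem' := by simp
  mul_mem' := by
    intro a b ha hb
    simp only [Set.mem_setOf_eq] at *
    calc ‖a * b‖ = ‖a‖ * ‖b‖ := norm_mul a b
      _ ≤ 1 * 1 := mul_le_mul ha hb (norm_nonneg b) zero_le_one
      _ = 1 := one_mul 1
  add_mem' := by
    intro a b ha hb
    simp only [Set.mem_setOf_eq] at *
    exact le_trans (IsUltrametricDist.norm_add_le_max a b) (max_le ha hb)

section Aux

variable (k : Type*) [NormedField k] [IsUltrametricDist k]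

set_option synthInstance.maxHeartbeats 1000000 in
lemma aux_smul_mul (c : valuationSubring k) (x y : DualNumber (LaurentPolynomial k)) :
    (c • x) * y = c • (x * y) := by
  erw [Subring.smul_def, Subring.smul_def, smul_mul_assoc]

set_option synthInstance.maxHeartbeats 1000000 in
lemma aux_mul_smul (c : valuationSubring k) (x y : DualNumber (LaurentPolynomial k)) :
    x * (c • y) = c • (x * y) := by
  erw [Subring.smul_def, Subring.smul_def, mul_smul_comm]

set_option synthInstance.maxHeartbeats 1000000 in
lemma aux_smul_mul_smul (a b : k) (x y : DualNumber (LaurentPolynomial k)) :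
    (a • x) * (b • y) = (a * b) • (x * y) :=
  smul_mul_smul_comm a x b y

set_option synthInstance.maxHeartbeats 1000000 in
lemma aux_inl_smul (a : k) (p : LaurentPolynomial k) :
    TrivSqZeroExt.inl (a • p) = a • (TrivSqZeroExt.inl p : DualNumber (LaurentPolynomial k)) :=
  by rw [TrivSqZeroExt.inl_smul]

set_option synthInstance.maxHeartbeats 1000000 in
lemma aux_inr_smul (a : k) (p : LaurentPolynomial k) :
    TrivSqZeroExt.inr (a • p) = a • (TrivSqZeroExt.inr p : DualNumber (LaurentPolynomial k)) :=
  by rw [TrivSqZeroExt.inr_smul]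

lemma aux_C_mul_T (a : k) (n : ℤ) :
    (LaurentPolynomial.C a * LaurentPolynomial.T n : LaurentPolynomial k)
      = a • LaurentPolynomial.T n := by
  rw [show LaurentPolynomial.C a = algebraMap k (LaurentPolynomial k) a from rfl,
    ← Algebra.smul_def]

end Aux

/-- Let `R = k[T,T⁻¹,Z]/(Z²)` (modelled as dual numbers over Laurent
polynomials) and `R₀` the `𝒪_k`-submodule with basis `ϖ^{|n|}Tⁿ` and `ϖ^{-|n|}TⁿZ`
(`n ∈ ℤ`). Then `R₀` is an `𝒪_k`-subalgebra of `R` with `k·R₀ = R`. -/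
theorem rost_ring_of_definition_is_subalgebra
    (k : Type*) [NontriviallyNormedField k] [IsUltrametricDist k] [CompleteSpace k]
    (ϖ : k) (hϖ0 : 0 < ‖ϖ‖) (hϖ1 : ‖ϖ‖ < 1)
    (R₀ : Submodule (valuationSubring k) (DualNumber (LaurentPolynomial k)))
    (hR₀ : R₀ = Submodule.span (valuationSubring k)
      ((Set.range fun n : ℤ =>
          (ϖ ^ n.natAbs) • TrivSqZeroExt.inl (LaurentPolynomial.T n)) ∪
       (Set.range fun n : ℤ =>
          ((ϖ⁻¹) ^ n.natAbs) •
            TrivSqZeroExt.inr (M := LaurentPolynomial k) (LaurentPolynomial.T n)))) :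
    (1 : DualNumber (LaurentPolynomial k)) ∈ R₀ ∧
    (∀ x ∈ R₀, ∀ y ∈ R₀, x * y ∈ R₀) ∧
    Submodule.span k (R₀ : Set (DualNumber (LaurentPolynomial k))) = ⊤ := by
  classical
  have hϖ : ϖ ≠ 0 := by intro h; simp [h] at hϖ0
  have hnorm : ∀ e : ℕ, ‖ϖ ^ e‖ ≤ 1 := fun e => by
    rw [norm_pow]; exact pow_le_one₀ (norm_nonneg _) hϖ1.le
  subst hR₀
  set A : Set (DualNumber (LaurentPolynomial k)) :=
      ((Set.range fun n : ℤ =>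
          (ϖ ^ n.natAbs) • TrivSqZeroExt.inl (LaurentPolynomial.T n)) ∪
       (Set.range fun n : ℤ =>
          ((ϖ⁻¹) ^ n.natAbs) •
            TrivSqZeroExt.inr (M := LaurentPolynomial k) (LaurentPolynomial.T n))) with hA
  set S := Submodule.span (valuationSubring k) A with hS
  have key : ∀ c : k, ‖c‖ ≤ 1 → ∀ x ∈ S, c • x ∈ S := by
    intro c hc x hx
    have := S.smul_mem (⟨c, hc⟩ : valuationSubring k) hx
    exact this
  have memA : ∀ t n : ℤ, (n.natAbs : ℤ) ≤ t →
      ϖ ^ t • (TrivSqZeroExt.inl (LaurentPolynomial.T n) :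
        DualNumber (LaurentPolynomial k)) ∈ S := by
    intro t n ht
    obtain ⟨e, rfl⟩ : ∃ e : ℕ, t = (n.natAbs : ℤ) + e := ⟨(t - n.natAbs).toNat, by omega⟩
    rw [zpow_add₀ hϖ, mul_comm, mul_smul, zpow_natCast, zpow_natCast]
    refine key _ (hnorm e) _ ?_
    exact Submodule.subset_span (Or.inl ⟨n, rfl⟩)
  have memB : ∀ t n : ℤ, -(n.natAbs : ℤ) ≤ t →
      ϖ ^ t • (TrivSqZeroExt.inr (LaurentPolynomial.T n) :
        DualNumber (LaurentPolynomial k)) ∈ S := by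
    intro t n ht
    obtain ⟨e, rfl⟩ : ∃ e : ℕ, t = -(n.natAbs : ℤ) + e := ⟨(t + n.natAbs).toNat, by omega⟩
    rw [add_comm, zpow_add₀ hϖ, mul_smul, zpow_natCast, zpow_neg, zpow_natCast, ← inv_pow]
    refine key _ (hnorm e) _ ?_
    exact Submodule.subset_span (Or.inr ⟨n, rfl⟩)
  have genA : ∀ n : ℤ, ((ϖ ^ n.natAbs) •
      TrivSqZeroExt.inl (LaurentPolynomial.T n) : DualNumber (LaurentPolynomial k))
      = ϖ ^ (n.natAbs : ℤ) • TrivSqZeroExt.inl (LaurentPolynomial.T n) := by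
    intro n; rw [zpow_natCast]
  have genB : ∀ n : ℤ, (((ϖ⁻¹) ^ n.natAbs) •
      TrivSqZeroExt.inr (LaurentPolynomial.T n) : DualNumber (LaurentPolynomial k))
      = ϖ ^ (-(n.natAbs : ℤ)) • TrivSqZeroExt.inr (LaurentPolynomial.T n) := by
    intro n; rw [zpow_neg, zpow_natCast, inv_pow]
  have hmul : ∀ x ∈ S, ∀ y ∈ S, x * y ∈ S := by
    intro x hx
    induction hx using Submodule.span_induction with
    | mem x hxA =>
      intro y hy
      induction hy using Submodule.span_induction with
      | mem y hyA =>
        rcases hxA with ⟨m, rfl⟩ | ⟨m, rfl⟩ <;> rcases hyA with ⟨n, rfl⟩ | ⟨n, rfl⟩ <;>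
          simp only [genA, genB]
        · rw [aux_smul_mul_smul, TrivSqZeroExt.inl_mul_inl, ← LaurentPolynomial.T_add,
            ← zpow_add₀ hϖ]
          refine memA _ _ ?_
          have := Int.natAbs_add_le m n
          omega
        · rw [aux_smul_mul_smul, TrivSqZeroExt.inl_mul_inr, smul_eq_mul,
            ← LaurentPolynomial.T_add, ← zpow_add₀ hϖ]
          refine memB _ _ ?_
          have h : n.natAbs ≤ (m + n).natAbs + m.natAbs := by
            simpa using Int.natAbs_add_le (m + n) (-m)
          omega
        · rw [aux_smul_mul_smul, TrivSqZeroExt.inr_mul_inl, op_smul_eq_smul, smul_eq_mul,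
            ← LaurentPolynomial.T_add, ← zpow_add₀ hϖ]
          refine memB _ _ ?_
          have h : m.natAbs ≤ (n + m).natAbs + n.natAbs := by
            simpa using Int.natAbs_add_le (n + m) (-n)
          omega
        · rw [aux_smul_mul_smul, TrivSqZeroExt.inr_mul_inr, smul_zero]
          exact zero_mem S
      | zero => rw [mul_zero]; exact zero_mem S
      | add y z hy hz ihy ihz => rw [mul_add]; exact add_mem ihy ihz
      | smul c y hy ih => rw [aux_mul_smul]; exact S.smul_mem c ih
    | zero => intro y hy; rw [zero_mul]; exact zero_mem S
    | add x z hx hz ihx ihz =>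
      intro y hy; rw [add_mul]; exact add_mem (ihx y hy) (ihz y hy)
    | smul c x hx ih =>
      intro y hy; rw [aux_smul_mul]; exact S.smul_mem c (ih y hy)
  refine ⟨?_, hmul, ?_⟩
  · have h1 : ((ϖ ^ (0 : ℤ).natAbs) •
        TrivSqZeroExt.inl (LaurentPolynomial.T 0) : DualNumber (LaurentPolynomial k)) ∈ S :=
      Submodule.subset_span (Or.inl ⟨0, rfl⟩)
    simpa [LaurentPolynomial.T_zero] using h1
  · rw [eq_top_iff]
    rintro x -
    have hinl : ∀ n : ℤ, (TrivSqZeroExt.inl (LaurentPolynomial.T n) :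
        DualNumber (LaurentPolynomial k)) ∈ Submodule.span k (S : Set _) := by
      intro n
      have h1 : ((ϖ ^ n.natAbs) • TrivSqZeroExt.inl (LaurentPolynomial.T n) :
          DualNumber (LaurentPolynomial k)) ∈ Submodule.span k (S : Set _) :=
        Submodule.subset_span (Submodule.subset_span (Or.inl ⟨n, rfl⟩))
      have h2 := Submodule.smul_mem _ ((ϖ ^ n.natAbs)⁻¹) h1
      rwa [smul_smul, inv_mul_cancel₀ (pow_ne_zero _ hϖ), one_smul] at h2
    have hinr : ∀ n : ℤ, (TrivSqZeroExt.inr (LaurentPolynomial.T n) :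
        DualNumber (LaurentPolynomial k)) ∈ Submodule.span k (S : Set _) := by
      intro n
      have h1 : (((ϖ⁻¹) ^ n.natAbs) • TrivSqZeroExt.inr (LaurentPolynomial.T n) :
          DualNumber (LaurentPolynomial k)) ∈ Submodule.span k (S : Set _) :=
        Submodule.subset_span (Submodule.subset_span (Or.inr ⟨n, rfl⟩))
      have h2 := Submodule.smul_mem _ (((ϖ⁻¹) ^ n.natAbs)⁻¹) h1
      rwa [smul_smul, inv_mul_cancel₀ (pow_ne_zero _ (inv_ne_zero hϖ)), one_smul] at h2
    have hinlp : ∀ p : LaurentPolynomial k, (TrivSqZeroExt.inl p :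
        DualNumber (LaurentPolynomial k)) ∈ Submodule.span k (S : Set _) := by
      intro p
      induction p using LaurentPolynomial.induction_on' with
      | add p q hp hq => rw [TrivSqZeroExt.inl_add]; exact add_mem hp hq
      | C_mul_T n a =>
        rw [aux_C_mul_T, aux_inl_smul]
        exact Submodule.smul_mem _ a (hinl n)
    have hinrp : ∀ p : LaurentPolynomial k, (TrivSqZeroExt.inr p :
        DualNumber (LaurentPolynomial k)) ∈ Submodule.span k (S : Set _) := by
      intro p
      induction p using LaurentPolynomial.induction_on' with
      | add p q hp hq => rw [TrivSqZeroExt.inr_add]; exact add_mem hp hq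
      | C_mul_T n a =>
        rw [aux_C_mul_T, aux_inr_smul]
        exact Submodule.smul_mem _ a (hinr n)
    rw [← TrivSqZeroExt.inl_fst_add_inr_snd_eq x]
    exact add_mem (hinlp _) (hinrp _)
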